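/- Let n ≥ 1, let σ be a permutation of {1,…,n} with permutation matrix P = P_σ, and let k ∈ SO(n,ℝ). The following are equivalent: (a) there exist a unit lower triangular matrix l with P l P⁻¹ unit upper triangular, a diagonal matrix a with strictly positive diagonal entries, and a unit upper triangular matrix m such that l = k·a·m; (b) k = u·l₀ for some u upper triangular with positive diagonal and l₀ unit lower triangular, AND P k P⁻¹ = u′·l′ for some u′ upper triangular with positive diagonal and some unit lower triangular l′ such that P⁻¹ l′ P is unit upper triangular. -/

import Mathlib

open Matrix

/-- The permutation matrix of `σ`: `(P_σ)_{ab} = 1` if `a = σ b`, else `0`. -/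
def permMat {n : ℕ} (σ : Equiv.Perm (Fin n)) : Matrix (Fin n) (Fin n) ℝ :=
  Matrix.of fun a b => if a = σ b then (1 : ℝ) else 0

/-- Unit lower triangular: `1`s on the diagonal, `0`s above it. -/
def IsUnitLower {n : ℕ} (M : Matrix (Fin n) (Fin n) ℝ) : Prop :=
  (∀ i, M i i = 1) ∧ ∀ i j : Fin n, i < j → M i j = 0

/-- Unit upper triangular: `1`s on the diagonal, `0`s below it. -/
def IsUnitUpper {n : ℕ} (M : Matrix (Fin n) (Fin n) ℝ) : Prop :=
  (∀ i, M i i = 1) ∧ ∀ i j : Fin n, j < i → M i j = 0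

/-- Upper triangular with strictly positive diagonal entries. -/
def IsUpperPos {n : ℕ} (M : Matrix (Fin n) (Fin n) ℝ) : Prop :=
  (∀ i j : Fin n, j < i → M i j = 0) ∧ ∀ i, 0 < M i i

/-- Diagonal with strictly positive diagonal entries. -/
def IsPosDiagonal {n : ℕ} (M : Matrix (Fin n) (Fin n) ℝ) : Prop :=
  (∀ i j : Fin n, i ≠ j → M i j = 0) ∧ ∀ i, 0 < M i i

/-- `SO(n,ℝ)`. -/
def IsSO {n : ℕ} (k : Matrix (Fin n) (Fin n) ℝ) : Prop :=
  kᵀ * k = 1 ∧ k.det = 1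

section AuxLemmas

variable {n : ℕ} {M X Y a c : Matrix (Fin n) (Fin n) ℝ}

lemma permMat_mul (σ τ : Equiv.Perm (Fin n)) :
    permMat σ * permMat τ = permMat (σ * τ) := by
  ext a b
  simp only [permMat, Matrix.mul_apply, Matrix.of_apply]
  rw [Finset.sum_eq_single (τ b)]
  · simp [Equiv.Perm.mul_apply]
    congr
  · intro c _ hc
    simp [hc, if_neg (Ne.symm hc)]
  · simp

lemma permMat_one : permMat (1 : Equiv.Perm (Fin n)) = 1 := by
  ext a b
  by_cases h : a = b <;> simp [permMat, Matrix.one_apply, h]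

lemma permMat_inv (σ : Equiv.Perm (Fin n)) : (permMat σ)⁻¹ = permMat σ⁻¹ := by
  apply Matrix.inv_eq_right_inv
  rw [permMat_mul, mul_inv_cancel, permMat_one]

lemma permMat_mul_left (σ : Equiv.Perm (Fin n)) (M : Matrix (Fin n) (Fin n) ℝ) :
    permMat σ * M = M.submatrix (⇑σ⁻¹) id := by
  ext a b
  simp only [permMat, Matrix.mul_apply, Matrix.of_apply, Matrix.submatrix_apply, id]
  rw [Finset.sum_eq_single (σ⁻¹ a)]
  · simp
  · intro c _ hc
    rw [if_neg, zero_mul]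
    intro h; exact hc (by simp [h])
  · simp

lemma permMat_mul_right (σ : Equiv.Perm (Fin n)) (M : Matrix (Fin n) (Fin n) ℝ) :
    M * permMat σ = M.submatrix id ⇑σ := by
  ext a b
  simp only [permMat, Matrix.mul_apply, Matrix.of_apply, Matrix.submatrix_apply, id]
  rw [Finset.sum_eq_single (σ b)]
  · simp
  · intro c _ hc
    rw [if_neg hc, mul_zero]
  · simp

lemma permMat_conj (σ : Equiv.Perm (Fin n)) (M : Matrix (Fin n) (Fin n) ℝ) :
    permMat σ * M * permMat σ⁻¹ = M.submatrix ⇑σ⁻¹ ⇑σ⁻¹ := by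
  rw [permMat_mul_left, permMat_mul_right]
  rfl

lemma permConj_inv (σ : Equiv.Perm (Fin n)) (X : Matrix (Fin n) (Fin n) ℝ) :
    permMat σ * X⁻¹ * permMat σ⁻¹ = (permMat σ * X * permMat σ⁻¹)⁻¹ := by
  rw [Matrix.mul_inv_rev, Matrix.mul_inv_rev, permMat_inv, permMat_inv, inv_inv]
  rw [mul_assoc]


lemma upper_det (h : ∀ i j : Fin n, j < i → M i j = 0) : M.det = ∏ i, M i i :=
  Matrix.det_of_upperTriangular (fun i j hij => h i j hij)

lemma lower_det (h : ∀ i j : Fin n, i < j → M i j = 0) : M.det = ∏ i, M i i :=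
  Matrix.det_of_lowerTriangular M (fun i j hij => h i j hij)

lemma upper_mul (hX : ∀ i j : Fin n, j < i → X i j = 0) (hY : ∀ i j : Fin n, j < i → Y i j = 0) :
    (∀ i j : Fin n, j < i → (X * Y) i j = 0) ∧ (∀ i, (X * Y) i i = X i i * Y i i) := by
  constructor
  · intro i j hij
    rw [Matrix.mul_apply]
    apply Finset.sum_eq_zero
    intro k _
    rcases le_or_gt k j with h | h
    · rw [hX i k (lt_of_le_of_lt h hij), zero_mul]
    · rw [hY k j h, mul_zero]
  · intro i
    rw [Matrix.mul_apply]
    rw [Finset.sum_eq_single i]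
    · intro k _ hk
      rcases lt_or_gt_of_ne hk with h | h
      · rw [hX i k h, zero_mul]
      · rw [hY k i h, mul_zero]
    · simp

lemma upper_inv (h : ∀ i j : Fin n, j < i → M i j = 0) (hd : ∀ i, M i i ≠ 0) :
    (∀ i j : Fin n, j < i → M⁻¹ i j = 0) ∧ (∀ i, M⁻¹ i i = (M i i)⁻¹) := by
  have hdet : IsUnit M.det := by
    rw [upper_det h]
    exact (Finset.prod_ne_zero_iff.2 (fun i _ => hd i)).isUnit
  have : Invertible M := M.invertibleOfIsUnitDet hdet
  have hbt : (∀ i j : Fin n, j < i → M⁻¹ i j = 0) :=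
    fun i j hij => Matrix.blockTriangular_inv_of_blockTriangular
      (fun i j hij => h i j hij) hij
  refine ⟨hbt, fun i => ?_⟩
  have h1 : (M * M⁻¹) i i = 1 := by rw [Matrix.mul_nonsing_inv M hdet, Matrix.one_apply_eq]
  rw [Matrix.mul_apply, Finset.sum_eq_single i] at h1
  · exact eq_inv_of_mul_eq_one_left (by rwa [mul_comm] at h1)
  · intro k _ hk
    rcases lt_or_gt_of_ne hk with hlt | hgt
    · rw [h i k hlt, zero_mul]
    · rw [hbt k i hgt, mul_zero]
  · simp

lemma IsUnitUpper.toUpperPos (h : IsUnitUpper M) : IsUpperPos M :=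
  ⟨h.2, fun i => by rw [h.1]; norm_num⟩

lemma IsPosDiagonal.toUpperPos (h : IsPosDiagonal M) : IsUpperPos M :=
  ⟨fun i j hij => h.1 i j (ne_of_gt hij) , h.2⟩

lemma IsUpperPos.mul (hX : IsUpperPos X) (hY : IsUpperPos Y) : IsUpperPos (X * Y) :=
  ⟨(upper_mul hX.1 hY.1).1, fun i => by
    rw [(upper_mul hX.1 hY.1).2 i]; exact mul_pos (hX.2 i) (hY.2 i)⟩

lemma IsUnitUpper.mul (hX : IsUnitUpper X) (hY : IsUnitUpper Y) : IsUnitUpper (X * Y) :=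
  ⟨fun i => by rw [(upper_mul hX.2 hY.2).2 i, hX.1, hY.1, one_mul],
   (upper_mul hX.2 hY.2).1⟩

lemma IsUnitLower.transpose (h : IsUnitLower M) : IsUnitUpper Mᵀ :=
  ⟨fun i => h.1 i, fun i j hij => h.2 j i hij⟩

lemma IsUnitUpper.transpose (h : IsUnitUpper M) : IsUnitLower Mᵀ :=
  ⟨fun i => h.1 i, fun i j hij => h.2 j i hij⟩

lemma IsUnitUpper.det_eq_one (h : IsUnitUpper M) : M.det = 1 := by
  rw [upper_det h.2]
  exact Finset.prod_eq_one (fun i _ => h.1 i)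

lemma IsUnitLower.det_eq_one (h : IsUnitLower M) : M.det = 1 := by
  rw [lower_det h.2]
  exact Finset.prod_eq_one (fun i _ => h.1 i)

lemma IsUpperPos.det_pos (h : IsUpperPos M) : 0 < M.det := by
  rw [upper_det h.1]
  exact Finset.prod_pos (fun i _ => h.2 i)

lemma IsUpperPos.isUnit_det (h : IsUpperPos M) : IsUnit M.det := h.det_pos.ne'.isUnit

lemma IsUnitUpper.inv (h : IsUnitUpper M) : IsUnitUpper M⁻¹ := by
  have hd : ∀ i, M i i ≠ 0 := fun i => by rw [h.1]; norm_num
  obtain ⟨h1, h2⟩ := upper_inv h.2 hd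
  exact ⟨fun i => by rw [h2 i, h.1 i, inv_one], h1⟩

lemma IsUpperPos.inv (h : IsUpperPos M) : IsUpperPos M⁻¹ := by
  obtain ⟨h1, h2⟩ := upper_inv h.1 (fun i => (h.2 i).ne')
  exact ⟨h1, fun i => by rw [h2 i]; exact inv_pos.2 (h.2 i)⟩

lemma IsUnitLower.inv (h : IsUnitLower M) : IsUnitLower M⁻¹ := by
  have := h.transpose.inv
  rw [← Matrix.transpose_nonsing_inv] at this
  have h2 := this.transpose
  rwa [Matrix.transpose_transpose] at h2

lemma IsPosDiagonal.eq_diagonal (h : IsPosDiagonal a) :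
    a = Matrix.diagonal (fun i => a i i) := by
  ext i j
  by_cases hij : i = j
  · subst hij; simp
  · rw [Matrix.diagonal_apply_ne _ hij]
    exact h.1 i j hij

lemma IsPosDiagonal.inv_eq (h : IsPosDiagonal a) :
    a⁻¹ = Matrix.diagonal (fun i => (a i i)⁻¹) := by
  apply Matrix.inv_eq_right_inv
  nth_rewrite 1 [h.eq_diagonal]
  rw [Matrix.diagonal_mul_diagonal]
  have he : (fun i => a i i * (a i i)⁻¹) = (fun _ => (1 : ℝ)) :=
    funext fun i => mul_inv_cancel₀ (h.2 i).ne'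
  rw [he, Matrix.diagonal_one]

lemma IsPosDiagonal.inv (h : IsPosDiagonal a) : IsPosDiagonal a⁻¹ := by
  rw [h.inv_eq]
  constructor
  · intro i j hij
    exact Matrix.diagonal_apply_ne _ hij
  · intro i
    rw [Matrix.diagonal_apply_eq]
    exact inv_pos.2 (h.2 i)

lemma IsPosDiagonal.transpose_eq (h : IsPosDiagonal a) : aᵀ = a := by
  ext i j
  by_cases hij : i = j
  · subst hij; rfl
  · rw [Matrix.transpose_apply, h.1 j i (Ne.symm hij), h.1 i j hij]

lemma IsPosDiagonal.mul_inv (h : IsPosDiagonal a) : a * a⁻¹ = 1 := by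
  nth_rewrite 1 [h.eq_diagonal]
  rw [h.inv_eq, Matrix.diagonal_mul_diagonal]
  have he : (fun i => a i i * (a i i)⁻¹) = (fun _ => (1 : ℝ)) :=
    funext fun i => mul_inv_cancel₀ (h.2 i).ne'
  rw [he, Matrix.diagonal_one]

lemma IsPosDiagonal.conj_unitLower (h : IsPosDiagonal a) (hX : IsUnitLower X) :
    IsUnitLower (a⁻¹ * X * a) := by
  nth_rewrite 2 [h.eq_diagonal]
  rw [h.inv_eq]
  constructor
  · intro i
    rw [Matrix.mul_diagonal, Matrix.diagonal_mul, hX.1 i, mul_one,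
      inv_mul_cancel₀ (h.2 i).ne']
  · intro i j hij
    rw [Matrix.mul_diagonal, Matrix.diagonal_mul, hX.2 i j hij]
    ring

lemma upperPos_split (hc : IsUpperPos c) :
    ∃ a m, IsPosDiagonal a ∧ IsUnitUpper m ∧ c = a * m := by
  have ha : IsPosDiagonal (Matrix.diagonal (fun i => c i i)) := by
    refine ⟨fun i j hij => Matrix.diagonal_apply_ne _ hij, fun i => by
      rw [Matrix.diagonal_apply_eq]; exact hc.2 i⟩
  refine ⟨Matrix.diagonal (fun i => c i i),
    Matrix.diagonal (fun i => (c i i)⁻¹) * c, ha, ?_, ?_⟩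
  · constructor
    · intro i
      rw [Matrix.diagonal_mul]
      exact inv_mul_cancel₀ (hc.2 i).ne'
    · intro i j hij
      rw [Matrix.diagonal_mul, hc.1 i j hij, mul_zero]
  · rw [← mul_assoc, Matrix.diagonal_mul_diagonal]
    have he : (fun i => c i i * (c i i)⁻¹) = (fun _ => (1 : ℝ)) :=
      funext fun i => mul_inv_cancel₀ (hc.2 i).ne'
    rw [he, Matrix.diagonal_one, Matrix.one_mul]


lemma sum_restrict {m : ℕ} (h : m ≤ n) (f : Fin n → ℝ) (hf : ∀ k : Fin n, m ≤ k.val → f k = 0) :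
    ∑ k : Fin m, f (Fin.castLE h k) = ∑ k : Fin n, f k := by
  have hc : ∀ k, f (Fin.castLE h k) = f ((Fin.castLEEmb h) k) := fun _ => rfl
  simp only [hc]
  rw [← Finset.sum_map Finset.univ (Fin.castLEEmb h) f]
  apply Finset.sum_subset (Finset.subset_univ _)
  intro k _ hk
  apply hf
  by_contra hlt
  push_neg at hlt
  exact hk (Finset.mem_map.2 ⟨⟨k.val, hlt⟩, Finset.mem_univ _, by ext; rfl⟩)

lemma mul_submatrix_upper {m : ℕ} (h : m ≤ n) (A B : Matrix (Fin n) (Fin n) ℝ)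
    (hB : ∀ i j : Fin n, j < i → B i j = 0) (ρ : Fin m → Fin n) :
    (A * B).submatrix ρ (Fin.castLE h) =
      A.submatrix ρ (Fin.castLE h) * B.submatrix (Fin.castLE h) (Fin.castLE h) := by
  ext a c
  simp only [Matrix.submatrix_apply, Matrix.mul_apply]
  rw [← sum_restrict h (fun k => A (ρ a) k * B k (Fin.castLE h c))]
  intro k hk
  rw [hB k (Fin.castLE h c) (Fin.lt_def.2 (by rw [Fin.val_castLE]; exact lt_of_lt_of_le c.isLt hk)), mul_zero]

lemma pattern_zero {u L B : Matrix (Fin n) (Fin n) ℝ} (τ : Equiv.Perm (Fin n))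
    (hu : ∀ i j : Fin n, j < i → u i j = 0)
    (hL : IsUnitLower L)
    (hB : ∀ i j : Fin n, j < i → B i j = 0) (hBd : ∀ i, B i i ≠ 0)
    (hfac : u.submatrix ⇑τ ⇑τ = L * B)
    (i j : Fin n) (hij : j < i) (hτ : τ j < τ i) : L i j = 0 := by
  set m := j.val with hm
  have hm1 : m + 1 ≤ n := j.isLt
  have hmn : m ≤ n := le_of_lt j.isLt
  set γ : Fin (m + 1) → Fin n := Fin.castLE hm1 with hγ
  set ρ : Fin (m + 1) → Fin n :=
    Fin.snoc (fun t : Fin m => Fin.castLE hmn t) i with hρ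
  have hγlast : γ (Fin.last m) = j := by
    ext; simp [hγ, hm]
  have hρlast : ρ (Fin.last m) = i := by
    simp [hρ]
  have hρcast : ∀ t : Fin m, ρ (Fin.castSucc t) = Fin.castLE hmn t := by
    intro t; simp [hρ]
  have hγcast : ∀ t : Fin m, γ (Fin.castSucc t) = Fin.castLE hmn t := by
    intro t; ext; simp [hγ]
  -- Step 1
  have hstep1 : (L * B).submatrix ρ γ = L.submatrix ρ γ * B.submatrix γ γ :=
    mul_submatrix_upper hm1 L B hB ρ
  -- Step 2
  have hstep2 : (L.submatrix ρ γ).det = L i j := by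
    rw [Matrix.det_succ_column (L.submatrix ρ γ) (Fin.last m),
        Finset.sum_eq_single (Fin.last m)]
    · have e1 : (L.submatrix ρ γ) (Fin.last m) (Fin.last m) = L i j := by
        rw [Matrix.submatrix_apply, hρlast, hγlast]
      have hAB : ((L.submatrix ρ γ).submatrix (Fin.last m).succAbove (Fin.last m).succAbove)
          = L.submatrix (Fin.castLE hmn) (Fin.castLE hmn) := by
        rw [Fin.succAbove_last, Matrix.submatrix_submatrix]
        ext a b
        simp [Function.comp, hρcast, hγcast]
      have hbt : (L.submatrix (Fin.castLE hmn) (Fin.castLE hmn)).BlockTriangular OrderDual.toDual := by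
        intro a b hab
        refine hL.2 _ _ ?_
        have : a < b := hab
        exact this
      have hdet1 : (L.submatrix (Fin.castLE hmn) (Fin.castLE hmn)).det = 1 := by
        rw [Matrix.det_of_lowerTriangular _ hbt]
        simp [hL.1]
      rw [e1, hAB, hdet1, Fin.val_last]
      rw [Even.neg_one_pow ⟨m, rfl⟩]
      ring
    · intro t _ ht
      have hz : (L.submatrix ρ γ) t (Fin.last m) = 0 := by
        obtain ⟨t', rfl⟩ := Fin.exists_castSucc_eq.2 ht
        rw [Matrix.submatrix_apply, hρcast, hγlast]
        exact hL.2 _ _ (show Fin.castLE hmn t' < j from t'.isLt)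
      rw [hz]
      ring
    · simp
  -- Step 3
  have hstep3 : (B.submatrix γ γ).det ≠ 0 := by
    have hbt : (B.submatrix γ γ).BlockTriangular id := by
      intro a b hab
      exact hB _ _ (show γ b < γ a from hab)
    rw [Matrix.det_of_upperTriangular hbt]
    exact Finset.prod_ne_zero_iff.2 fun t _ => hBd _
  -- Step 4
  have hstep4 : ((u.submatrix ⇑τ ⇑τ).submatrix ρ γ).det = 0 := by
    rw [Matrix.submatrix_submatrix, Matrix.det_apply]
    apply Finset.sum_eq_zero
    intro π _
    suffices h : ∏ t, (u.submatrix (⇑τ ∘ ρ) (⇑τ ∘ γ)) (π t) t = 0 by rw [h, smul_zero]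
    have hex : ∃ t, τ (γ t) < τ (ρ (π t)) := by
      by_contra hno
      push_neg at hno
      set Afs := Finset.univ.filter (fun t : Fin (m + 1) => τ i ≤ τ (ρ t)) with hA
      set Bfs := Finset.univ.filter (fun t : Fin (m + 1) => τ i ≤ τ (γ t)) with hBf
      have hcard1 : Afs.card ≤ Bfs.card := by
        apply Finset.card_le_card_of_injOn (fun s => π⁻¹ s)
        · intro s hs
          simp only [hA, hBf, Finset.mem_coe, Finset.mem_filter, Finset.mem_univ, true_and] at hs ⊢
          calc τ i ≤ τ (ρ s) := hs
            _ = τ (ρ (π (π⁻¹ s))) := by simp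
            _ ≤ τ (γ (π⁻¹ s)) := hno _
        · intro a _ b _ hab
          exact (Equiv.injective π⁻¹) hab
      have hlastA : Fin.last m ∈ Afs := by
        simp [hA, hρlast]
      have hlastB : Fin.last m ∉ Bfs := by
        simp [hBf, hγlast]
        exact hτ
      have hsubset : Bfs ⊆ Afs := by
        intro t ht
        simp only [hA, hBf, Finset.mem_filter, Finset.mem_univ, true_and] at ht ⊢
        have htne : t ≠ Fin.last m := fun he => hlastB (he ▸ ht |> fun h => by
          simp [hBf]; exact (he ▸ ht))
        obtain ⟨t', rfl⟩ := Fin.exists_castSucc_eq.2 htne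
        rw [hγcast] at ht
        rw [hρcast]
        exact ht
      have hlt : Bfs.card < Afs.card :=
        Finset.card_lt_card ((Finset.ssubset_iff_of_subset hsubset).2 ⟨_, hlastA, hlastB⟩)
      omega
    obtain ⟨t, ht⟩ := hex
    refine Finset.prod_eq_zero (Finset.mem_univ t) ?_
    simp only [Matrix.submatrix_apply, Function.comp]
    exact hu _ _ ht
  -- combine
  have := hstep4
  rw [hfac, hstep1, Matrix.det_mul, hstep2] at this
  rcases mul_eq_zero.1 this with h | h
  · exact h
  · exact absurd h hstep3

lemma mul_submatrix_lower {n m : ℕ} (h : m ≤ n) (A B : Matrix (Fin n) (Fin n) ℝ)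
    (hA : ∀ i j : Fin n, i < j → A i j = 0) (γ : Fin m → Fin n) :
    (A * B).submatrix (Fin.castLE h) γ =
      A.submatrix (Fin.castLE h) (Fin.castLE h) * B.submatrix (Fin.castLE h) γ := by
  ext a c
  simp only [Matrix.submatrix_apply, Matrix.mul_apply]
  rw [← sum_restrict h (fun k => A (Fin.castLE h a) k * B k (γ c))]
  intro k hk
  rw [hA (Fin.castLE h a) k (Fin.lt_def.2 (by rw [Fin.val_castLE]; exact lt_of_lt_of_le a.isLt hk)), zero_mul]

lemma castLE_succ {n m : ℕ} (h : m + 1 ≤ n + 1) (t : Fin m) :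
    Fin.castLE h t.succ = (Fin.castLE (Nat.succ_le_succ_iff.1 h) t).succ := by
  ext; simp

lemma lu_exists : ∀ (n : ℕ) (M : Matrix (Fin n) (Fin n) ℝ),
    (∀ (m : ℕ) (h : m ≤ n), 0 < (M.submatrix (Fin.castLE h) (Fin.castLE h)).det) →
    ∃ L B, IsUnitLower L ∧ IsUpperPos B ∧ M = L * B := by
  intro n
  induction n with
  | zero =>
    intro M _
    refine ⟨1, 1, ⟨fun i => i.elim0, fun i _ _ => i.elim0⟩,
      ⟨fun i _ _ => i.elim0, fun i => i.elim0⟩, ?_⟩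
    ext i j
    exact i.elim0
  | succ n IH =>
    intro M hmin
    have hp : 0 < M 0 0 := by
      have h1 := hmin 1 (by omega)
      rw [Matrix.det_fin_one] at h1
      simpa using h1
    set p := M 0 0 with hpdef
    have hpne : p ≠ 0 := ne_of_gt hp
    set S : Matrix (Fin n) (Fin n) ℝ :=
      Matrix.of (fun i j => M i.succ j.succ - M i.succ 0 * M 0 j.succ / p) with hS
    set M₁ : Matrix (Fin (n + 1)) (Fin (n + 1)) ℝ :=
      Matrix.of (Fin.cons (M 0) (fun i' => Fin.cons 0 (S i'))) with hM₁
    set L₁ : Matrix (Fin (n + 1)) (Fin (n + 1)) ℝ :=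
      Matrix.of (Fin.cons (Fin.cons 1 0)
        (fun i' => Fin.cons (M i'.succ 0 / p) (fun j' => if i' = j' then (1 : ℝ) else 0))) with hL₁
    have hfac1 : M = L₁ * M₁ := by
      ext i j
      rw [Matrix.mul_apply, Fin.sum_univ_succ]
      rcases Fin.eq_zero_or_eq_succ i with rfl | ⟨i', rfl⟩
      · simp [hL₁, hM₁]
      · rcases Fin.eq_zero_or_eq_succ j with rfl | ⟨j', rfl⟩
        · simp [hL₁, hM₁]
          rw [div_mul_cancel₀ _ hpne]
        · simp only [hL₁, hM₁, Matrix.of_apply, Fin.cons_succ, Fin.cons_zero]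
          rw [Finset.sum_eq_single i']
          · rw [if_pos rfl, one_mul, hS]
            simp only [Matrix.of_apply]
            ring
          · intro b _ hb
            rw [if_neg (Ne.symm hb), zero_mul]
          · simp
    -- leading minors of S are positive
    have hL1low : ∀ i j : Fin (n + 1), i < j → L₁ i j = 0 := by
      intro i j hij
      rcases Fin.eq_zero_or_eq_succ j with rfl | ⟨j', rfl⟩
      · exact absurd hij (by simp)
      · rcases Fin.eq_zero_or_eq_succ i with rfl | ⟨i', rfl⟩
        · simp [hL₁]
        · have hne : i' ≠ j' := fun he => by
            rw [he] at hij; exact lt_irrefl _ hij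
          simp [hL₁, hne]
    have hL1diag : ∀ x : Fin (n + 1), L₁ x x = 1 := by
      intro x
      rcases Fin.eq_zero_or_eq_succ x with rfl | ⟨x', rfl⟩
      · simp [hL₁]
      · simp [hL₁]
    have hminS : ∀ (m : ℕ) (h : m ≤ n), 0 < (S.submatrix (Fin.castLE h) (Fin.castLE h)).det := by
      intro m h
      have hm1 : m + 1 ≤ n + 1 := Nat.succ_le_succ h
      have hdetL : (L₁.submatrix (Fin.castLE hm1) (Fin.castLE hm1)).det = 1 := by
        have hbt : (L₁.submatrix (Fin.castLE hm1) (Fin.castLE hm1)).BlockTriangular OrderDual.toDual := by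
          intro a b hab
          exact hL1low _ _ (show Fin.castLE hm1 a < Fin.castLE hm1 b from hab)
        rw [Matrix.det_of_lowerTriangular _ hbt]
        apply Finset.prod_eq_one
        intro t _
        rw [Matrix.submatrix_apply]
        exact hL1diag _
      have hdetM1 : (M₁.submatrix (Fin.castLE hm1) (Fin.castLE hm1)).det
          = p * (S.submatrix (Fin.castLE h) (Fin.castLE h)).det := by
        rw [Matrix.det_succ_column_zero, Finset.sum_eq_single 0]
        · have e0 : (M₁.submatrix (Fin.castLE hm1) (Fin.castLE hm1)) 0 0 = p := by
            have : Fin.castLE hm1 (0 : Fin (m + 1)) = 0 := by ext; simp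
            rw [Matrix.submatrix_apply, this]
            simp [hM₁, hpdef]
          rw [e0]
          simp only [Fin.val_zero, pow_zero, one_mul]
          congr 1
        · intro t _ ht
          obtain ⟨t', rfl⟩ := (Fin.eq_zero_or_eq_succ t).resolve_left ht
          have hz : (M₁.submatrix (Fin.castLE hm1) (Fin.castLE hm1)) t'.succ 0 = 0 := by
            have h0 : Fin.castLE hm1 (0 : Fin (m + 1)) = 0 := by ext; simp
            rw [Matrix.submatrix_apply, castLE_succ, h0]
            simp [hM₁]
          rw [hz]
          ring
        · simp
      have hpos := hmin (m + 1) hm1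
      rw [hfac1, mul_submatrix_lower hm1 L₁ M₁ hL1low, Matrix.det_mul, hdetL, one_mul,
        hdetM1] at hpos
      by_contra hcon
      push_neg at hcon
      have := mul_nonpos_of_nonneg_of_nonpos hp.le hcon
      linarith
    obtain ⟨L', B', hL', hB', hS'⟩ := IH S hminS
    set L : Matrix (Fin (n + 1)) (Fin (n + 1)) ℝ :=
      Matrix.of (Fin.cons (Fin.cons 1 0) (fun i' => Fin.cons (M i'.succ 0 / p) (L' i'))) with hLdef
    set B : Matrix (Fin (n + 1)) (Fin (n + 1)) ℝ :=
      Matrix.of (Fin.cons (M 0) (fun i' => Fin.cons 0 (B' i'))) with hBdef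
    refine ⟨L, B, ⟨?_, ?_⟩, ⟨?_, ?_⟩, ?_⟩
    · intro x
      rcases Fin.eq_zero_or_eq_succ x with rfl | ⟨x', rfl⟩
      · simp [hLdef]
      · simp [hLdef, hL'.1]
    · intro i j hij
      rcases Fin.eq_zero_or_eq_succ j with rfl | ⟨j', rfl⟩
      · exact absurd hij (by simp)
      · rcases Fin.eq_zero_or_eq_succ i with rfl | ⟨i', rfl⟩
        · simp [hLdef]
        · simp [hLdef]
          exact hL'.2 _ _ (by rwa [Fin.succ_lt_succ_iff] at hij)
    · intro i j hij
      rcases Fin.eq_zero_or_eq_succ i with rfl | ⟨i', rfl⟩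
      · exact absurd hij (by simp)
      · rcases Fin.eq_zero_or_eq_succ j with rfl | ⟨j', rfl⟩
        · simp [hBdef]
        · simp [hBdef]
          exact hB'.1 _ _ (by rwa [Fin.succ_lt_succ_iff] at hij)
    · intro x
      rcases Fin.eq_zero_or_eq_succ x with rfl | ⟨x', rfl⟩
      · simpa [hBdef] using hp
      · simpa [hBdef] using hB'.2 x'
    · ext i j
      rw [Matrix.mul_apply, Fin.sum_univ_succ]
      rcases Fin.eq_zero_or_eq_succ i with rfl | ⟨i', rfl⟩
      · simp [hLdef, hBdef]
      · rcases Fin.eq_zero_or_eq_succ j with rfl | ⟨j', rfl⟩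
        · simp only [hLdef, hBdef, Matrix.of_apply, Fin.cons_succ, Fin.cons_zero, mul_zero,
            Finset.sum_const_zero, add_zero]
          rw [div_mul_cancel₀ _ hpne]
        · simp only [hLdef, hBdef, Matrix.of_apply, Fin.cons_succ, Fin.cons_zero]
          have hsum : ∑ k : Fin n, L' i' k * B' k j' = S i' j' := by
            rw [← Matrix.mul_apply, ← hS']
          rw [hsum]
          simp only [hS, Matrix.of_apply]
          ring


lemma permConj_mul (σ : Equiv.Perm (Fin n)) (X Y : Matrix (Fin n) (Fin n) ℝ) :
    permMat σ * (X * Y) * permMat σ⁻¹ =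
      (permMat σ * X * permMat σ⁻¹) * (permMat σ * Y * permMat σ⁻¹) := by
  have h1 : permMat σ⁻¹ * permMat σ = 1 := by
    rw [permMat_mul, inv_mul_cancel, permMat_one]
  have h2 : permMat σ * X * permMat σ⁻¹ * (permMat σ * Y * permMat σ⁻¹)
      = permMat σ * X * (permMat σ⁻¹ * permMat σ) * Y * permMat σ⁻¹ := by
    simp only [mul_assoc]
  rw [h2, h1, mul_one]
  simp only [mul_assoc]

lemma permConj_conj (σ : Equiv.Perm (Fin n)) (X : Matrix (Fin n) (Fin n) ℝ) :
    permMat σ⁻¹ * (permMat σ * X * permMat σ⁻¹) * permMat σ = X := by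
  have h1 : permMat σ⁻¹ * permMat σ = 1 := by
    rw [permMat_mul, inv_mul_cancel, permMat_one]
  calc permMat σ⁻¹ * (permMat σ * X * permMat σ⁻¹) * permMat σ
      = (permMat σ⁻¹ * permMat σ) * X * (permMat σ⁻¹ * permMat σ) := by
        simp only [mul_assoc]
    _ = X := by rw [h1, one_mul, mul_one]

lemma det_submatrix_pos {u : Matrix (Fin n) (Fin n) ℝ}
    (hu : ∀ i j : Fin n, j < i → u i j = 0) (hd : ∀ i, 0 < u i i)
    {m : ℕ} (e : Fin m → Fin n) (he : Function.Injective e) :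
    0 < (u.submatrix e e).det := by
  set π := Tuple.sort e with hπ
  have hmono : Monotone (e ∘ π) := Tuple.monotone_sort e
  have hsm : StrictMono (e ∘ π) := hmono.strictMono_of_injective (he.comp π.injective)
  have h1 : (u.submatrix e e).det = (u.submatrix (e ∘ π) (e ∘ π)).det := by
    rw [← Matrix.submatrix_submatrix, Matrix.det_submatrix_equiv_self]
  have h2 : (u.submatrix (e ∘ π) (e ∘ π)).BlockTriangular id := fun a b hab => hu _ _ (hsm hab)
  rw [h1, Matrix.det_of_upperTriangular h2]
  exact Finset.prod_pos (fun t _ => hd _)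

lemma core_lemma {u : Matrix (Fin n) (Fin n) ℝ} (hu : IsUpperPos u) (τ : Equiv.Perm (Fin n)) :
    ∃ L B : Matrix (Fin n) (Fin n) ℝ, IsUnitLower L ∧
      (∀ i j : Fin n, j < i → τ j < τ i → L i j = 0) ∧ IsUpperPos B ∧
      u.submatrix ⇑τ ⇑τ = L * B := by
  have hmin : ∀ (m : ℕ) (h : m ≤ n),
      0 < (((u.submatrix ⇑τ ⇑τ)).submatrix (Fin.castLE h) (Fin.castLE h)).det := by
    intro m h
    rw [Matrix.submatrix_submatrix]
    exact det_submatrix_pos hu.1 hu.2 _ (τ.injective.comp (Fin.castLE_injective h))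
  obtain ⟨L, B, hL, hB, hfac⟩ := lu_exists n (u.submatrix ⇑τ ⇑τ) hmin
  exact ⟨L, B, hL, fun i j hij hτ =>
    pattern_zero τ hu.1 hL hB.1 (fun i => (hB.2 i).ne') hfac i j hij hτ, hB, hfac⟩

end AuxLemmas

theorem stmt_4 (n : ℕ) (hn : 1 ≤ n) (σ : Equiv.Perm (Fin n))
    (k : Matrix (Fin n) (Fin n) ℝ) (hk : IsSO k) :
    (∃ l a m : Matrix (Fin n) (Fin n) ℝ,
        IsUnitLower l ∧ IsUnitUpper (permMat σ * l * (permMat σ)⁻¹) ∧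
        IsPosDiagonal a ∧ IsUnitUpper m ∧ l = k * a * m) ↔
    ((∃ u l₀ : Matrix (Fin n) (Fin n) ℝ, IsUpperPos u ∧ IsUnitLower l₀ ∧ k = u * l₀) ∧
      (∃ u' l' : Matrix (Fin n) (Fin n) ℝ, IsUpperPos u' ∧ IsUnitLower l' ∧
        IsUnitUpper ((permMat σ)⁻¹ * l' * permMat σ) ∧
        permMat σ * k * (permMat σ)⁻¹ = u' * l')) := by
  constructor
  · rintro ⟨l, a, m, hl, hlc, ha, hm, hlam⟩
    rw [permMat_inv] at hlc
    have hldet : IsUnit l.det := by rw [hl.det_eq_one]; exact isUnit_one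
    have hIam : IsUpperPos (a * m) := ha.toUpperPos.mul hm.toUpperPos
    have hamdet : IsUnit (a * m).det := hIam.isUnit_det
    constructor
    · -- k = u * l₀
      have h1 : kᵀ * l = a * m := by
        rw [hlam, mul_assoc, ← mul_assoc kᵀ k, hk.1, one_mul]
      have h2 : kᵀ = (a * m) * l⁻¹ := by
        rw [← h1, mul_assoc, Matrix.mul_nonsing_inv _ hldet, mul_one]
      have h3 : k = (l⁻¹)ᵀ * mᵀ * a := by
        have h4 := congrArg Matrix.transpose h2
        rw [Matrix.transpose_transpose, Matrix.transpose_mul, Matrix.transpose_mul,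
          ha.transpose_eq, ← mul_assoc] at h4
        exact h4
      refine ⟨(l⁻¹)ᵀ * a, a⁻¹ * (mᵀ * a), (hl.inv.transpose.toUpperPos).mul ha.toUpperPos,
        ?_, ?_⟩
      · have h5 := ha.conj_unitLower hm.transpose
        rwa [mul_assoc] at h5
      · have h6 : ((l⁻¹)ᵀ * a) * (a⁻¹ * (mᵀ * a)) = (l⁻¹)ᵀ * mᵀ * a := by
          rw [mul_assoc (l⁻¹)ᵀ a _, ← mul_assoc a a⁻¹ _, ha.mul_inv, one_mul, ← mul_assoc]
        rw [h3, h6]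
    · -- conjugated part
      obtain ⟨lam, β, hlamL, hpat, hβ, hfac⟩ := core_lemma hIam σ⁻¹
      have hkl : k = l * (a * m)⁻¹ := by
        rw [hlam, mul_assoc k a m, mul_assoc, Matrix.mul_nonsing_inv _ hamdet, mul_one]
      have hconj1 : permMat σ * (a * m)⁻¹ * permMat σ⁻¹ = β⁻¹ * lam⁻¹ := by
        rw [permConj_inv, permMat_conj]
        rw [show ((a * m).submatrix ⇑σ⁻¹ ⇑σ⁻¹) = lam * β from hfac, Matrix.mul_inv_rev]
      have hsub : IsUnitUpper (lam.submatrix ⇑σ ⇑σ) := by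
        constructor
        · intro i
          exact hlamL.1 _
        · intro i j hij
          rcases lt_trichotomy (σ i) (σ j) with h | h | h
          · exact hlamL.2 _ _ h
          · exact absurd (σ.injective h) (ne_of_gt hij)
          · exact hpat _ _ h (by simpa using hij)
      have hwconj : permMat σ⁻¹ * lam * permMat σ = lam.submatrix ⇑σ ⇑σ := by
        have h7 := permMat_conj σ⁻¹ lam
        rwa [inv_inv] at h7
      refine ⟨(permMat σ * l * permMat σ⁻¹) * β⁻¹, lam⁻¹,
        hlc.toUpperPos.mul hβ.inv, hlamL.inv, ?_, ?_⟩
      · rw [permMat_inv]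
        have h8 := permConj_inv σ⁻¹ lam
        rw [inv_inv] at h8
        rw [h8, hwconj]
        exact hsub.inv
      · rw [permMat_inv, hkl, permConj_mul, hconj1]
        simp only [mul_assoc]
  · rintro ⟨⟨u, l₀, hu, hl₀, hk1'⟩, ⟨u', l', hu', hl', hw, hK⟩⟩
    obtain ⟨lam, β, hlamL, hpat, hβ, hfac⟩ := core_lemma hu' σ
    rw [permMat_inv] at hw hK
    have hkP : k = (permMat σ⁻¹ * u' * permMat σ) * (permMat σ⁻¹ * l' * permMat σ) := by
      have h2 := congrArg (fun X => permMat σ⁻¹ * X * permMat σ) hK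
      rw [permConj_conj] at h2
      have h4 := permConj_mul σ⁻¹ u' l'
      rw [inv_inv] at h4
      rw [h4] at h2
      exact h2
    have hQuP : permMat σ⁻¹ * u' * permMat σ = lam * β := by
      have h5 := permMat_conj σ⁻¹ u'
      rw [inv_inv] at h5
      exact h5.trans hfac
    have hβw : IsUpperPos (β * (permMat σ⁻¹ * l' * permMat σ)) := hβ.mul hw.toUpperPos
    obtain ⟨a, m, ha, hm, hc⟩ := upperPos_split hβw.inv
    have hk2 : k = lam * (β * (permMat σ⁻¹ * l' * permMat σ)) := by
      rw [hkP, hQuP, mul_assoc]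
    refine ⟨lam, a, m, hlamL, ?_, ha, hm, ?_⟩
    · rw [permMat_inv, permMat_conj]
      constructor
      · intro i
        exact hlamL.1 _
      · intro i j hij
        rcases lt_trichotomy (σ⁻¹ i) (σ⁻¹ j) with h | h | h
        · exact hlamL.2 _ _ h
        · exact absurd (σ⁻¹.injective h) (ne_of_gt hij)
        · exact hpat _ _ h (by simpa using hij)
    · have hinv : (β * (permMat σ⁻¹ * l' * permMat σ))
          * (β * (permMat σ⁻¹ * l' * permMat σ))⁻¹ = 1 :=
        Matrix.mul_nonsing_inv _ hβw.isUnit_det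
      calc lam = lam * ((β * (permMat σ⁻¹ * l' * permMat σ))
              * (β * (permMat σ⁻¹ * l' * permMat σ))⁻¹) := by rw [hinv, mul_one]
        _ = lam * (β * (permMat σ⁻¹ * l' * permMat σ)) * (a * m) := by
              rw [← hc]
              simp only [mul_assoc]
        _ = k * (a * m) := by rw [← hk2]
        _ = k * a * m := by rw [mul_assoc]
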